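/- Let G be a finite simple graph with at least one edge. Then M(G) ≤ α(G) − 1, where M(G) is the multiplicity of x = −1 as a root of the independence polynomial P_G(x) and α(G) is the independence number of G. -/
import Mathlib


attribute [local instance] Classical.propDecidable

/-- `s` is an independent set of vertices of `G`. -/
def IsIndep {V : Type*} (G : SimpleGraph V) (s : Finset V) : Prop :=
  ∀ v ∈ s, ∀ w ∈ s, ¬ G.Adj v w

/-- The independence polynomial `P_G(x) = ∑ g_i x^i`. -/
noncomputable def indepPoly {V : Type*} [Fintype V] (G : SimpleGraph V) : Polynomial ℤ :=
  ∑ s ∈ Finset.univ.filter (fun s : Finset V => IsIndep G s), Polynomial.X ^ s.card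

/-- The independence number `α(G)`. -/
noncomputable def indepNum {V : Type*} [Fintype V] (G : SimpleGraph V) : ℕ :=
  (Finset.univ.filter (fun s : Finset V => IsIndep G s)).sup Finset.card

/-- `M(G)`: the multiplicity of `x = -1` as a root of `P_G(x)`. -/
noncomputable def multM {V : Type*} [Fintype V] (G : SimpleGraph V) : ℕ :=
  (indepPoly G).rootMultiplicity (-1)

open Polynomial Finset in
lemma indepPoly_coeff {V : Type*} [Fintype V] (G : SimpleGraph V) (k : ℕ) :
    (indepPoly G).coeff k =
      (((Finset.univ.filter (fun s : Finset V => IsIndep G s)).filter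
        (fun s => s.card = k)).card : ℤ) := by
  classical
  rw [indepPoly, Polynomial.finset_sum_coeff, Finset.sum_filter, Finset.filter_filter,
    ← Finset.sum_boole]
  apply Finset.sum_congr rfl
  intro s _
  by_cases h : IsIndep G s <;> simp [h, Polynomial.coeff_X_pow, eq_comm]

/-- If `G` has at least one edge then `M(G) ≤ α(G) - 1`. -/
theorem multM_le_indepNum_sub_one {V : Type*} [Fintype V] (G : SimpleGraph V)
    (hedge : ∃ u w : V, G.Adj u w) :
    multM G ≤ indepNum G - 1 := by
  classical
  obtain ⟨u, w, huw⟩ := hedge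
  set S := Finset.univ.filter (fun s : Finset V => IsIndep G s) with hS
  have hsingle : ∀ v : V, ({v} : Finset V) ∈ S := by
    intro v
    simp only [hS, Finset.mem_filter, Finset.mem_univ, true_and]
    intro a ha b hb hab
    rw [Finset.mem_singleton] at ha hb
    subst ha; subst hb
    exact G.irrefl hab
  have hαpos : 1 ≤ indepNum G := by
    calc 1 = ({u} : Finset V).card := (Finset.card_singleton u).symm
      _ ≤ indepNum G := Finset.le_sup (hsingle u)
  -- coefficient 0 is 1
  have hcoeff0 : (indepPoly G).coeff 0 = 1 := by
    rw [indepPoly_coeff]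
    have : (S.filter (fun s => s.card = 0)) = {∅} := by
      ext s
      simp only [Finset.mem_filter, Finset.mem_singleton, Finset.card_eq_zero]
      constructor
      · rintro ⟨-, h⟩; exact h
      · rintro rfl
        refine ⟨?_, rfl⟩
        simp only [hS, Finset.mem_filter, Finset.mem_univ, true_and]
        intro a ha; simp at ha
    rw [this]
    simp
  have hP0 : indepPoly G ≠ 0 := by
    intro h
    rw [h] at hcoeff0
    simp at hcoeff0
  -- there is an independent set of maximal size
  have hSne : S.Nonempty := ⟨{u}, hsingle u⟩
  obtain ⟨t, htS, ht⟩ := Finset.exists_mem_eq_sup S hSne Finset.card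
  have htcard : t.card = indepNum G := ht.symm
  -- coeff at indepNum is nonzero
  have hcoeffα : (indepPoly G).coeff (indepNum G) ≠ 0 := by
    rw [indepPoly_coeff]
    have hne : (S.filter (fun s => s.card = indepNum G)).Nonempty :=
      ⟨t, Finset.mem_filter.mpr ⟨htS, htcard⟩⟩
    have hpos := Finset.card_pos.mpr hne
    exact_mod_cast hpos.ne'
  -- natDegree = indepNum
  have hdeg : (indepPoly G).natDegree = indepNum G := by
    apply le_antisymm
    · rw [Polynomial.natDegree_le_iff_coeff_eq_zero]
      intro N hN
      rw [indepPoly_coeff]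
      have : (S.filter (fun s => s.card = N)) = ∅ := by
        apply Finset.filter_false_of_mem
        intro s hsS hcard
        have := Finset.le_sup (f := Finset.card) hsS
        rw [hcard] at this
        exact absurd (this.trans_lt hN) (lt_irrefl _)
      rw [this]
      simp
    · exact Polynomial.le_natDegree_of_ne_zero hcoeffα
  -- suffices multM G < indepNum G
  rcases Nat.lt_or_ge (multM G) (indepNum G) with h | h
  · omega
  exfalso
  -- (X+1)^α divides P
  have hdvd : (Polynomial.X + 1 : Polynomial ℤ) ^ indepNum G ∣ indepPoly G := by
    have h1 : (Polynomial.X - Polynomial.C (-1) : Polynomial ℤ) ^ multM G ∣ indepPoly G :=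
      Polynomial.pow_rootMultiplicity_dvd _ _
    have h2 : (Polynomial.X + 1 : Polynomial ℤ) = Polynomial.X - Polynomial.C (-1) := by
      simp
    rw [h2]
    exact dvd_trans (pow_dvd_pow _ h) h1
  obtain ⟨q, hq⟩ := hdvd
  have hXadd : (Polynomial.X + 1 : Polynomial ℤ) = Polynomial.X + Polynomial.C 1 := by simp
  have hX1deg : (Polynomial.X + 1 : Polynomial ℤ).natDegree = 1 := by
    rw [hXadd]; exact Polynomial.natDegree_X_add_C 1
  have hqne : q ≠ 0 := by
    intro h0
    rw [h0, mul_zero] at hq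
    exact hP0 hq
  have hbase : (Polynomial.X + 1 : Polynomial ℤ) ≠ 0 := by
    intro h0
    have := congrArg Polynomial.natDegree h0
    rw [hX1deg] at this
    simp at this
  have hqdeg : q.natDegree = 0 := by
    have hdm : ((Polynomial.X + 1 : Polynomial ℤ) ^ indepNum G * q).natDegree =
        ((Polynomial.X + 1 : Polynomial ℤ) ^ indepNum G).natDegree + q.natDegree :=
      Polynomial.natDegree_mul (pow_ne_zero _ hbase) hqne
    have hpowdeg : ((Polynomial.X + 1 : Polynomial ℤ) ^ indepNum G).natDegree = indepNum G := by
      rw [Polynomial.natDegree_pow, hX1deg, mul_one]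
    rw [← hq, hdeg, hpowdeg] at hdm
    omega
  obtain ⟨c, hc⟩ := Polynomial.natDegree_eq_zero.mp hqdeg
  -- c = 1 from constant coefficient
  have hc1 : c = 1 := by
    have := hcoeff0
    rw [hq, ← hc] at this
    rw [Polynomial.mul_coeff_zero] at this
    have hpow0 : ((Polynomial.X + 1 : Polynomial ℤ) ^ indepNum G).coeff 0 = 1 := by
      rw [Polynomial.coeff_zero_eq_eval_zero]
      simp
    rw [hpow0, one_mul, Polynomial.coeff_C] at this
    simpa using this
  have hPeq : indepPoly G = (Polynomial.X + 1 : Polynomial ℤ) ^ indepNum G := by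
    rw [hq, ← hc, hc1]
    simp
  -- coefficient 1 computation
  have hcard1 : ((S.filter (fun s => s.card = 1)).card : ℤ) = (Fintype.card V : ℤ) := by
    congr 1
    have himg : S.filter (fun s => s.card = 1) = Finset.univ.image (fun v : V => ({v} : Finset V)) := by
      ext s
      simp only [Finset.mem_filter, Finset.mem_image, Finset.mem_univ, true_and,
        Finset.card_eq_one]
      constructor
      · rintro ⟨-, v, rfl⟩; exact ⟨v, rfl⟩
      · rintro ⟨v, rfl⟩; exact ⟨hsingle v, v, rfl⟩
    rw [himg, Finset.card_image_of_injective _ (fun a b hab => by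
      simpa using hab), Finset.card_univ]
  have hcoeff1 : (indepPoly G).coeff 1 = (indepNum G : ℤ) := by
    rw [hPeq, Polynomial.coeff_X_add_one_pow]
    rw [Nat.choose_one_right]
  have hcardV' : Fintype.card V = indepNum G := by
    have h1 := hcoeff1
    rw [indepPoly_coeff] at h1
    rw [hcard1] at h1
    exact_mod_cast h1
  -- so t = univ and univ is independent: contradiction
  have htu : t = Finset.univ := by
    apply Finset.eq_univ_of_card
    rw [htcard, hcardV']
  have htind : IsIndep G t := by
    have := Finset.mem_filter.mp htS
    exact this.2
  rw [htu] at htind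
  exact htind u (Finset.mem_univ u) w (Finset.mem_univ w) huw
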